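/- Let C₂, C₃ ∈ (0,∞), κ > 0, D ∈ (0,∞], let Φ(u) = exp(u²/2) − 1, let N : (0,D) → [1,∞) satisfy N(ε) ≤ C₃·ε^{−κ} for ε ∈ (0,D), and let Q : (0,∞) → [0,1] satisfy Q(u) ≤ N(δ)/Φ(u/(1 + δ/C₂)) for all u > 0 and all δ ∈ (0,D). Then there exists u₀ ∈ (0,∞), depending only on C₂, C₃, κ and D, such that for all u ≥ u₀ one has Q(u) ≤ 2 · C₃ · C₂^{−κ} · κ^{−κ} · (κ+1)^{κ+1} · u^{2κ} · e^{−u²/2}. -/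

import Mathlib

open MeasureTheory Metric Set Filter
open scoped ENNReal

/-- **Example 4.2** (inequality (4.22)) of the paper: the subgaussian case
`Φ(u) = e^{u²/2} − 1` of the covering bound of Proposition 4.2 with a polynomial
covering-number bound `N(ε) ≤ C₃ ε^{−κ}` yields, for all large `u`,
`Q(u) ≤ 2 C₃ C₂^{−κ} κ^{−κ} (κ+1)^{κ+1} u^{2κ} e^{−u²/2}`. -/
theorem example_4_2_subgaussian
    (C₂ C₃ κ : ℝ) (hC₂ : 0 < C₂) (hC₃ : 0 < C₃) (hκ : 0 < κ)
    (D : ℝ≥0∞) (hD : 0 < D)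
    (N : ℝ → ℝ)
    (hN1 : ∀ ε : ℝ, 0 < ε → ENNReal.ofReal ε < D → 1 ≤ N ε)
    (hN : ∀ ε : ℝ, 0 < ε → ENNReal.ofReal ε < D → N ε ≤ C₃ * ε ^ (-κ))
    (Q : ℝ → ℝ) (hQ : ∀ u : ℝ, 0 < u → Q u ∈ Set.Icc (0 : ℝ) 1)
    (hQbound : ∀ u : ℝ, 0 < u → ∀ δ : ℝ, 0 < δ → ENNReal.ofReal δ < D →
      Q u ≤ N δ / (Real.exp ((u / (1 + δ / C₂)) ^ 2 / 2) - 1)) :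
    ∃ u₀ : ℝ, 0 < u₀ ∧ ∀ u : ℝ, u₀ ≤ u →
      Q u ≤ 2 * C₃ * C₂ ^ (-κ) * κ ^ (-κ) * (κ + 1) ^ (κ + 1) *
        u ^ (2 * κ) * Real.exp (-(u ^ 2) / 2) := by
  -- pick a positive real `d` with `ofReal d < D`
  obtain ⟨d, hd0, hdD⟩ : ∃ d : ℝ, 0 < d ∧ ENNReal.ofReal d < D := by
    rcases eq_or_ne D ∞ with h | h
    · exact ⟨1, one_pos, by simp [h]⟩
    · have ht : 0 < D.toReal := ENNReal.toReal_pos hD.ne' h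
      refine ⟨D.toReal / 2, by linarith, ?_⟩
      rw [ENNReal.ofReal_lt_iff_lt_toReal (by linarith) h]
      linarith
  set u₀ : ℝ := max (Real.sqrt (2 * Real.log (2 * (κ + 1))) + 1)
      (Real.sqrt (C₂ * κ / ((κ + 1) * d)) + 1) with hu₀def
  have hu₀pos : 0 < u₀ := by
    have := Real.sqrt_nonneg (2 * Real.log (2 * (κ + 1)))
    have h1 : Real.sqrt (2 * Real.log (2 * (κ + 1))) + 1 ≤ u₀ := le_max_left _ _
    linarith
  refine ⟨u₀, hu₀pos, fun u hu => ?_⟩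
  have hupos : 0 < u := lt_of_lt_of_le hu₀pos hu
  have hκ1 : (0:ℝ) < κ + 1 := by linarith
  -- `exp (u²/2) ≥ 2(κ+1)`
  have hexp : 2 * (κ + 1) ≤ Real.exp (u ^ 2 / 2) := by
    have hs : Real.sqrt (2 * Real.log (2 * (κ + 1))) ≤ u := by
      have := le_max_left (Real.sqrt (2 * Real.log (2 * (κ + 1))) + 1)
        (Real.sqrt (C₂ * κ / ((κ + 1) * d)) + 1)
      linarith [le_trans this hu]
    have hla : (0:ℝ) ≤ 2 * Real.log (2 * (κ + 1)) := by
      have : (1:ℝ) ≤ 2 * (κ + 1) := by linarith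
      have := Real.log_nonneg this
      linarith
    have hsq : 2 * Real.log (2 * (κ + 1)) ≤ u ^ 2 := by
      nlinarith [Real.sq_sqrt hla, Real.sqrt_nonneg (2 * Real.log (2 * (κ + 1)))]
    calc 2 * (κ + 1) = Real.exp (Real.log (2 * (κ + 1))) := by
          rw [Real.exp_log (by linarith)]
      _ ≤ Real.exp (u ^ 2 / 2) := Real.exp_le_exp.mpr (by linarith)
  -- the choice of δ
  set δ : ℝ := C₂ * κ / ((κ + 1) * u ^ 2) with hδdef
  have hu2 : (0:ℝ) < u ^ 2 := by positivity
  have hδ0 : 0 < δ := by positivity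
  have hδd : δ ≤ d := by
    have hs : Real.sqrt (C₂ * κ / ((κ + 1) * d)) ≤ u := by
      have := le_max_right (Real.sqrt (2 * Real.log (2 * (κ + 1))) + 1)
        (Real.sqrt (C₂ * κ / ((κ + 1) * d)) + 1)
      linarith [le_trans this hu]
    have hb : (0:ℝ) ≤ C₂ * κ / ((κ + 1) * d) := by positivity
    have hsq : C₂ * κ / ((κ + 1) * d) ≤ u ^ 2 := by
      nlinarith [Real.sq_sqrt hb, Real.sqrt_nonneg (C₂ * κ / ((κ + 1) * d))]
    rw [hδdef, div_le_iff₀ (by positivity)]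
    rw [div_le_iff₀ (by positivity)] at hsq
    nlinarith
  have hδD : ENNReal.ofReal δ < D :=
    lt_of_le_of_lt (ENNReal.ofReal_le_ofReal hδd) hdD
  -- the key bound on `a = u / (1 + δ/C₂)`
  have hδC : δ / C₂ = κ / ((κ + 1) * u ^ 2) := by
    rw [hδdef]; field_simp
  set s : ℝ := κ / (κ + 1) with hsdef
  have hs0 : 0 < s := by positivity
  have hs1 : s < 1 := by
    rw [hsdef, div_lt_one hκ1]; linarith
  have ht0 : (0:ℝ) < 1 + δ / C₂ := by positivity
  have ha2 : u ^ 2 - 2 * s ≤ (u / (1 + δ / C₂)) ^ 2 := by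
    have heq : 1 + δ / C₂ = (u ^ 2 + s) / u ^ 2 := by
      rw [hδC, hsdef]; field_simp
    rw [heq, div_div_eq_mul_div, div_pow, le_div_iff₀ (by positivity)]
    nlinarith [hs0.le, hu2, mul_pos (mul_pos hs0 hs0) hu2, mul_pos (mul_pos hs0 hs0) hs0]
  -- lower bound for the denominator
  have hEbound : Real.exp (u ^ 2 / 2) / (2 * (κ + 1)) ≤
      Real.exp ((u / (1 + δ / C₂)) ^ 2 / 2) - 1 := by
    set X : ℝ := Real.exp (u ^ 2 / 2) with hXdef
    have hX0 : 0 < X := Real.exp_pos _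
    have h1 : Real.exp (u ^ 2 / 2 - s) ≤ Real.exp ((u / (1 + δ / C₂)) ^ 2 / 2) :=
      Real.exp_le_exp.mpr (by linarith)
    have h2 : X * (1 - s) ≤ Real.exp (u ^ 2 / 2 - s) := by
      have hE : Real.exp (u ^ 2 / 2 - s) = X * Real.exp (-s) := by
        rw [hXdef, ← Real.exp_add]; ring_nf
      rw [hE]
      nlinarith [Real.add_one_le_exp (-s), Real.exp_pos (-s)]
    have h1s : 1 - s = 1 / (κ + 1) := by
      rw [hsdef]; field_simp; ring
    have h3 : X / (2 * (κ + 1)) ≤ X * (1 - s) - 1 := by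
      rw [h1s]
      rw [div_le_iff₀ (by positivity)]
      have hXrw : X * (1 / (κ + 1)) * (2 * (κ + 1)) = 2 * X := by
        field_simp
      nlinarith
    linarith
  -- apply the hypotheses
  have hQb := hQbound u hupos δ hδ0 hδD
  have hNb := hN δ hδ0 hδD
  have hN1b := hN1 δ hδ0 hδD
  have hEpos : 0 < Real.exp (u ^ 2 / 2) / (2 * (κ + 1)) := by positivity
  have hchain : Q u ≤ (C₃ * δ ^ (-κ)) / (Real.exp (u ^ 2 / 2) / (2 * (κ + 1))) := by
    refine le_trans hQb (div_le_div₀ (by positivity) hNb hEpos hEbound)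
  -- rewrite the right-hand side
  have hrpow : δ ^ (-κ) = C₂ ^ (-κ) * κ ^ (-κ) * (κ + 1) ^ κ * u ^ (2 * κ) := by
    have hu2κ : (u ^ 2 : ℝ) ^ κ = u ^ (2 * κ) := by
      rw [← Real.rpow_natCast u 2, ← Real.rpow_mul hupos.le]; norm_num
    have hδinv : δ⁻¹ = ((κ + 1) * u ^ 2) / (C₂ * κ) := by
      rw [hδdef]; field_simp
    rw [Real.rpow_neg hδ0.le, ← Real.inv_rpow hδ0.le, hδinv,
      Real.div_rpow (by positivity) (by positivity),
      Real.mul_rpow hκ1.le (by positivity), Real.mul_rpow hC₂.le hκ.le,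
      hu2κ, Real.rpow_neg hC₂.le, Real.rpow_neg hκ.le]
    field_simp
  have hfinal : (C₃ * δ ^ (-κ)) / (Real.exp (u ^ 2 / 2) / (2 * (κ + 1))) =
      2 * C₃ * C₂ ^ (-κ) * κ ^ (-κ) * (κ + 1) ^ (κ + 1) *
        u ^ (2 * κ) * Real.exp (-(u ^ 2) / 2) := by
    rw [hrpow]
    have hκ11 : (κ + 1 : ℝ) ^ (κ + 1) = (κ + 1) ^ κ * (κ + 1) := by
      rw [Real.rpow_add hκ1, Real.rpow_one]
    have hexpneg : Real.exp (-(u ^ 2) / 2) = (Real.exp (u ^ 2 / 2))⁻¹ := by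
      rw [← Real.exp_neg]; ring_nf
    rw [hκ11, hexpneg]
    field_simp
  rw [← hfinal]
  exact hchain
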